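/- Let 2 ≤ p ≤ 4 be real, let 0 < β ≤ 1, and let σ ≥ 0 satisfy σ > 1 - 2/p. Then there is a constant C > 0 such that for every sequence α : ℤ → ℂ with ∑_{k∈ℤ} ⟨k⟩^{-βp/2} |α_k|^p < ∞, one has ∑_{(n,m)∈ℤ²} |α_n|² |α_m|² ⟨n+m⟩^{-2σ} ⟨n² + m²⟩^{-β} ≤ C (∑_{k∈ℤ} ⟨k⟩^{-βp/2} |α_k|^p)^{4/p}. -/

import Mathlib

open MeasureTheory
open scoped ENNReal NNReal

/-- The Japanese bracket `⟨x⟩ = (1 + x²)^{1/2}`. -/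
noncomputable def jb (x : ℝ) : ℝ := Real.sqrt (1 + x ^ 2)

lemma jb_pos (x : ℝ) : 0 < jb x := Real.sqrt_pos.2 (by positivity)

lemma one_le_jb (x : ℝ) : 1 ≤ jb x := by
  rw [show (1:ℝ) = Real.sqrt 1 by simp]
  exact Real.sqrt_le_sqrt (by nlinarith [sq_nonneg x])

lemma abs_le_jb (x : ℝ) : |x| ≤ jb x := by
  rw [← Real.sqrt_sq_eq_abs]
  exact Real.sqrt_le_sqrt (by nlinarith)

lemma jb_mul_le (n m : ℝ) : jb n * jb m ≤ Real.sqrt 2 * jb (n ^ 2 + m ^ 2) := by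
  unfold jb
  rw [← Real.sqrt_mul (by positivity), ← Real.sqrt_mul (by norm_num)]
  exact Real.sqrt_le_sqrt (by nlinarith [sq_nonneg (n*m), sq_nonneg (n^2+m^2), sq_nonneg (n^2+m^2-1)])

lemma jbneg (x y : ℝ) {β : ℝ} (hβ : 0 ≤ β) :
    jb (x ^ 2 + y ^ 2) ^ (-β) ≤ Real.sqrt 2 ^ β * (jb x ^ (-β) * jb y ^ (-β)) := by
  have h2 : (0:ℝ) < Real.sqrt 2 := by positivity
  have key : jb x * jb y / Real.sqrt 2 ≤ jb (x ^ 2 + y ^ 2) := by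
    rw [div_le_iff₀ h2]
    calc jb x * jb y ≤ Real.sqrt 2 * jb (x ^ 2 + y ^ 2) := jb_mul_le x y
      _ = jb (x ^ 2 + y ^ 2) * Real.sqrt 2 := by ring
  have h0 : (0:ℝ) < jb x * jb y / Real.sqrt 2 :=
    div_pos (mul_pos (jb_pos x) (jb_pos y)) h2
  calc jb (x ^ 2 + y ^ 2) ^ (-β)
      ≤ (jb x * jb y / Real.sqrt 2) ^ (-β) :=
        Real.rpow_le_rpow_of_nonpos h0 key (neg_nonpos.2 hβ)
    _ = Real.sqrt 2 ^ β * (jb x ^ (-β) * jb y ^ (-β)) := by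
        rw [Real.div_rpow (mul_nonneg (jb_pos x).le (jb_pos y).le) h2.le,
          Real.mul_rpow (jb_pos x).le (jb_pos y).le, Real.rpow_neg h2.le, div_eq_mul_inv, inv_inv]
        ring

-- summability of jb^(-τ)
lemma summable_jb_neg {τ : ℝ} (hτ : 1 < τ) : Summable (fun s : ℤ => jb (s : ℝ) ^ (-τ)) := by
  have hg : Summable (fun s : ℤ => |(s:ℝ)| ^ (-τ) + if s = 0 then (1:ℝ) else 0) :=
    (Real.summable_abs_int_rpow hτ).add
      (summable_of_ne_finset_zero (s := {(0:ℤ)}) (by intro b hb; simp at hb; simp [hb]))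
  refine Summable.of_nonneg_of_le (fun s => Real.rpow_nonneg (jb_pos _).le _) (fun s => ?_) hg
  rcases eq_or_ne s 0 with rfl | hs
  · simp [jb, Real.zero_rpow (by linarith : -τ ≠ 0), Real.one_rpow]
  · have h1 : (0:ℝ) < |(s:ℝ)| := by
      simp only [abs_pos, Int.cast_ne_zero]; exact hs
    have : jb (s:ℝ) ^ (-τ) ≤ |(s:ℝ)| ^ (-τ) :=
      Real.rpow_le_rpow_of_nonpos h1 (abs_le_jb _) (by linarith)
    calc jb (s:ℝ) ^ (-τ) ≤ |(s:ℝ)| ^ (-τ) := this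
      _ ≤ _ := le_add_of_nonneg_right (by positivity)

lemma holder_pt (x y w W : ℝ≥0∞) {q t1 t2 : ℝ} (hq : 0 ≤ q) (ht1 : 0 ≤ t1) (ht2 : 0 ≤ t2)
    (hsum : q * t1 + q * t2 = 1) (hw : w ≤ W ^ (2 * t2)) :
    x * y * w ≤ (x ^ q * y ^ q) ^ t1 * ((y ^ q * W) ^ t2 * (W * x ^ q) ^ t2) := by
  have hx : x ^ (q * t1) * x ^ (q * t2) = x := by
    rw [← ENNReal.rpow_add_of_nonneg _ _ (by positivity) (by positivity), hsum,
      ENNReal.rpow_one]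
  have hy : y ^ (q * t1) * y ^ (q * t2) = y := by
    rw [← ENNReal.rpow_add_of_nonneg _ _ (by positivity) (by positivity), hsum,
      ENNReal.rpow_one]
  have hW : W ^ t2 * W ^ t2 = W ^ (2 * t2) := by
    rw [← ENNReal.rpow_add_of_nonneg _ _ ht2 ht2, two_mul]
  calc x * y * w ≤ x * y * W ^ (2 * t2) := by gcongr
    _ = (x ^ q * y ^ q) ^ t1 * ((y ^ q * W) ^ t2 * (W * x ^ q) ^ t2) := by
        rw [ENNReal.mul_rpow_of_nonneg _ _ ht1, ENNReal.mul_rpow_of_nonneg _ _ ht2,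
          ENNReal.mul_rpow_of_nonneg _ _ ht2, ← ENNReal.rpow_mul, ← ENNReal.rpow_mul,
          ← ENNReal.rpow_mul, ← ENNReal.rpow_mul]
        rw [show x ^ (q*t1) * y ^ (q*t1) * (y ^ (q*t2) * W ^ t2 * (W ^ t2 * x ^ (q*t2)))
            = (x ^ (q*t1) * x ^ (q*t2)) * (y ^ (q*t1) * y ^ (q*t2)) * (W ^ t2 * W ^ t2) by ring,
          hx, hy, hW]

lemma young_sum (b W w : ℤ → ℝ≥0∞) {q t1 t2 : ℝ} (hq : 0 ≤ q) (ht1 : 0 ≤ t1) (ht2 : 0 ≤ t2)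
    (hqt : q * t1 + q * t2 = 1) (hT : t1 + t2 + t2 = 1)
    (hw : ∀ s, w s ≤ W s ^ (2 * t2)) :
    ∑' nm : ℤ × ℤ, b nm.1 * b nm.2 * w (nm.1 + nm.2)
      ≤ (∑' k, b k ^ q) ^ (2 * (t1 + t2)) * (∑' s, W s) ^ (2 * t2) := by
  classical
  set Bq := ∑' k, b k ^ q with hBq
  set SW := ∑' s, W s with hSW
  set G : Fin 3 → ℤ × ℤ → ℝ≥0∞ :=
    ![fun nm => b nm.1 ^ q * b nm.2 ^ q,
      fun nm => b nm.2 ^ q * W (nm.1 + nm.2),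
      fun nm => W (nm.1 + nm.2) * b nm.1 ^ q] with hG
  set e : Fin 3 → ℝ := ![t1, t2, t2] with he
  have holder : ∑' nm : ℤ × ℤ, (G 0 nm ^ t1 * (G 1 nm ^ t2 * G 2 nm ^ t2))
      ≤ (∑' nm : ℤ × ℤ, G 0 nm) ^ t1 *
        ((∑' nm : ℤ × ℤ, G 1 nm) ^ t2 * (∑' nm : ℤ × ℤ, G 2 nm) ^ t2) := by
    have H := ENNReal.lintegral_prod_norm_pow_le (μ := (Measure.count : Measure (ℤ × ℤ)))
      Finset.univ (f := G) (fun i _ => (measurable_of_countable _).aemeasurable)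
      (p := e) (by simp [he, Fin.sum_univ_three]; linarith) (fun i _ => by fin_cases i <;> simpa [he])
    simp only [lintegral_count, Fin.prod_univ_three] at H
    simpa [he, mul_assoc] using H
  have S0 : ∑' nm : ℤ × ℤ, G 0 nm = Bq * Bq := by
    rw [hG]
    simp only [Matrix.cons_val_zero]
    rw [ENNReal.tsum_prod']
    simp only [ENNReal.tsum_mul_left]
    rw [ENNReal.tsum_mul_right]
  have S1 : ∑' nm : ℤ × ℤ, G 1 nm = Bq * SW := by
    rw [hG]
    simp only [Matrix.cons_val_one, Matrix.head_cons, Matrix.cons_val_zero]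
    rw [ENNReal.tsum_prod', ENNReal.tsum_comm]
    have : ∀ m : ℤ, ∑' n : ℤ, b m ^ q * W (n + m) = b m ^ q * SW := by
      intro m
      have h := (Equiv.addRight m).tsum_eq W
      simp only [Equiv.coe_addRight] at h
      rw [ENNReal.tsum_mul_left, hSW, h]
    simp only [this]
    rw [ENNReal.tsum_mul_right]
  have S2 : ∑' nm : ℤ × ℤ, G 2 nm = SW * Bq := by
    rw [hG]
    simp only [Matrix.cons_val_two, Matrix.tail_cons, Matrix.head_cons]
    rw [ENNReal.tsum_prod']
    have : ∀ n : ℤ, ∑' m : ℤ, W (n + m) * b n ^ q = SW * b n ^ q := by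
      intro n
      have h := (Equiv.addLeft n).tsum_eq W
      simp only [Equiv.coe_addLeft] at h
      rw [ENNReal.tsum_mul_right, hSW, h]
    simp only [this]
    rw [ENNReal.tsum_mul_left, mul_comm]
  calc ∑' nm : ℤ × ℤ, b nm.1 * b nm.2 * w (nm.1 + nm.2)
      ≤ ∑' nm : ℤ × ℤ, (G 0 nm ^ t1 * (G 1 nm ^ t2 * G 2 nm ^ t2)) := by
        refine ENNReal.tsum_le_tsum (fun nm => ?_)
        simpa [hG] using holder_pt (b nm.1) (b nm.2) (w (nm.1 + nm.2)) (W (nm.1 + nm.2))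
          hq ht1 ht2 hqt (hw _)
    _ ≤ (∑' nm : ℤ × ℤ, G 0 nm) ^ t1 *
        ((∑' nm : ℤ × ℤ, G 1 nm) ^ t2 * (∑' nm : ℤ × ℤ, G 2 nm) ^ t2) := holder
    _ = (Bq * Bq) ^ t1 * ((Bq * SW) ^ t2 * (SW * Bq) ^ t2) := by rw [S0, S1, S2]
    _ = Bq ^ (2 * (t1 + t2)) * SW ^ (2 * t2) := by
        rw [ENNReal.mul_rpow_of_nonneg _ _ ht1, ENNReal.mul_rpow_of_nonneg _ _ ht2,
          ENNReal.mul_rpow_of_nonneg _ _ ht2,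
          show Bq ^ t1 * Bq ^ t1 * (Bq ^ t2 * SW ^ t2 * (SW ^ t2 * Bq ^ t2))
            = (Bq ^ t1 * Bq ^ t1 * (Bq ^ t2 * Bq ^ t2)) * (SW ^ t2 * SW ^ t2) by ring,
          ← ENNReal.rpow_add_of_nonneg _ _ ht1 ht1, ← ENNReal.rpow_add_of_nonneg _ _ ht2 ht2,
          ← ENNReal.rpow_add_of_nonneg _ _ (by positivity) (by positivity),
          ← ENNReal.rpow_add_of_nonneg _ _ ht2 ht2]
        rw [show t1 + t1 + (t2 + t2) = 2 * (t1 + t2) by ring, show t2 + t2 = 2 * t2 by ring]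


open MeasureTheory
open scoped ENNReal

/-- For `2 ≤ p ≤ 4`, `0 < β ≤ 1`, `σ ≥ 0` with `σ > 1 - 2/p`, there is `C > 0`
such that for every sequence `α : ℤ → ℂ` with `∑_k ⟨k⟩^{-βp/2} |α_k|^p < ∞`,
`∑_{(n,m)∈ℤ²} |α_n|² |α_m|² ⟨n+m⟩^{-2σ} ⟨n²+m²⟩^{-β} ≤ C (∑_k ⟨k⟩^{-βp/2} |α_k|^p)^{4/p}`. -/
theorem stmt3 (p β σ : ℝ) (hp2 : 2 ≤ p) (hp4 : p ≤ 4) (hβ0 : 0 < β) (hβ1 : β ≤ 1)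
    (hσ0 : 0 ≤ σ) (hσ : 1 - 2 / p < σ) :
    ∃ C : ℝ, 0 < C ∧ ∀ α : ℤ → ℂ,
      Summable (fun k : ℤ => jb (k : ℝ) ^ (-(β * p / 2)) * ‖α k‖ ^ p) →
      (∑' nm : ℤ × ℤ,
          ‖α nm.1‖ ^ 2 * ‖α nm.2‖ ^ 2 * jb ((nm.1 : ℝ) + (nm.2 : ℝ)) ^ (-(2 * σ)) *
            jb ((nm.1 : ℝ) ^ 2 + (nm.2 : ℝ) ^ 2) ^ (-β))
        ≤ C * (∑' k : ℤ, jb (k : ℝ) ^ (-(β * p / 2)) * ‖α k‖ ^ p) ^ (4 / p) := by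
  have hp0 : (0:ℝ) < p := by linarith
  set q : ℝ := p / 2 with hqdef
  set t1 : ℝ := 4 / p - 1 with ht1def
  set t2 : ℝ := 1 - 2 / p with ht2def
  have hqpos : 0 < q := by rw [hqdef]; positivity
  have ht1 : 0 ≤ t1 := by
    have : 1 ≤ 4 / p := (one_le_div hp0).2 (by linarith)
    rw [ht1def]; linarith
  have ht2 : 0 ≤ t2 := by
    have : 2 / p ≤ 1 := (div_le_one hp0).2 hp2
    rw [ht2def]; linarith
  have hσt2 : t2 < σ := by rw [ht2def]; exact hσ
  have hσpos : 0 < σ := lt_of_le_of_lt ht2 hσt2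
  have hst : 0 < σ + t2 := by linarith
  set τ : ℝ := 2 * σ / (σ + t2) with hτdef
  have hτ1 : 1 < τ := by rw [hτdef, lt_div_iff₀ hst]; linarith
  have hτt2 : τ * (2 * t2) ≤ 2 * σ := by
    rw [hτdef, div_mul_eq_mul_div, div_le_iff₀ hst]; nlinarith
  have hqt : q * t1 + q * t2 = 1 := by
    rw [hqdef, ht1def, ht2def]; field_simp; ring
  have hT : t1 + t2 + t2 = 1 := by rw [ht1def, ht2def]; field_simp; ring
  have h2q : 2 * (t1 + t2) = 4 / p := by rw [ht1def, ht2def]; ring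
  have hSτsum : Summable (fun s : ℤ => jb (s : ℝ) ^ (-τ)) := summable_jb_neg hτ1
  set Sτ : ℝ := ∑' s : ℤ, jb (s : ℝ) ^ (-τ) with hSτdef
  have hSτpos : 0 < Sτ :=
    Summable.tsum_pos hSτsum (fun s => Real.rpow_nonneg (jb_pos _).le _) 0
      (Real.rpow_pos_of_pos (jb_pos _) _)
  have hsqrt2 : (0:ℝ) < Real.sqrt 2 := by positivity
  refine ⟨Real.sqrt 2 ^ β * Sτ ^ (2 * t2), by positivity, ?_⟩
  intro α hα
  set B : ℝ := ∑' k : ℤ, jb (k : ℝ) ^ (-(β * p / 2)) * ‖α k‖ ^ p with hBdef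
  have hterm_nn : ∀ k : ℤ, 0 ≤ jb (k : ℝ) ^ (-(β * p / 2)) * ‖α k‖ ^ p := fun k =>
    mul_nonneg (Real.rpow_nonneg (jb_pos _).le _) (Real.rpow_nonneg (norm_nonneg _) _)
  have hBnn : 0 ≤ B := tsum_nonneg hterm_nn
  set C : ℝ := Real.sqrt 2 ^ β * Sτ ^ (2 * t2) with hCdef
  have hCnn : 0 ≤ C := by rw [hCdef]; positivity
  -- ENNReal versions
  set bE : ℤ → ℝ≥0∞ := fun k => ENNReal.ofReal (jb (k : ℝ) ^ (-β) * ‖α k‖ ^ 2) with hbEdef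
  set WE : ℤ → ℝ≥0∞ := fun s => ENNReal.ofReal (jb (s : ℝ) ^ (-τ)) with hWEdef
  set wE : ℤ → ℝ≥0∞ := fun s => ENNReal.ofReal (jb (s : ℝ) ^ (-(2 * σ))) with hwEdef
  have hb_nn : ∀ k : ℤ, 0 ≤ jb (k : ℝ) ^ (-β) * ‖α k‖ ^ 2 := fun k =>
    mul_nonneg (Real.rpow_nonneg (jb_pos _).le _) (by positivity)
  have hbq : ∀ k : ℤ, bE k ^ q = ENNReal.ofReal (jb (k : ℝ) ^ (-(β * p / 2)) * ‖α k‖ ^ p) := by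
    intro k
    rw [hbEdef]
    dsimp only
    rw [ENNReal.ofReal_rpow_of_nonneg (hb_nn k) hqpos.le]
    congr 1
    rw [Real.mul_rpow (Real.rpow_nonneg (jb_pos _).le _) (by positivity),
      ← Real.rpow_natCast ‖α k‖ 2, ← Real.rpow_mul (norm_nonneg _),
      ← Real.rpow_mul (jb_pos _).le]
    push_cast
    rw [show -β * q = -(β * p / 2) by rw [hqdef]; ring,
      show (2:ℝ) * q = p by rw [hqdef]; ring]
  have hBE : ∑' k : ℤ, bE k ^ q = ENNReal.ofReal B := by
    simp_rw [hbq]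
    rw [hBdef, ENNReal.ofReal_tsum_of_nonneg hterm_nn hα]
  have hSWE : ∑' s : ℤ, WE s = ENNReal.ofReal Sτ := by
    rw [hWEdef, hSτdef,
      ENNReal.ofReal_tsum_of_nonneg (fun s => Real.rpow_nonneg (jb_pos _).le _) hSτsum]
  have hwW : ∀ s : ℤ, wE s ≤ WE s ^ (2 * t2) := by
    intro s
    rw [hWEdef, hwEdef]
    dsimp only
    rw [ENNReal.ofReal_rpow_of_nonneg (Real.rpow_nonneg (jb_pos _).le _) (by positivity),
      ← Real.rpow_mul (jb_pos _).le]
    exact ENNReal.ofReal_le_ofReal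
      (Real.rpow_le_rpow_of_exponent_le (one_le_jb _) (by nlinarith [hτt2]))
  set F : ℤ × ℤ → ℝ := fun nm =>
    ‖α nm.1‖ ^ 2 * ‖α nm.2‖ ^ 2 * jb ((nm.1 : ℝ) + (nm.2 : ℝ)) ^ (-(2 * σ)) *
      jb ((nm.1 : ℝ) ^ 2 + (nm.2 : ℝ) ^ 2) ^ (-β) with hFdef
  have hFnn : ∀ nm : ℤ × ℤ, 0 ≤ F nm := by
    intro nm
    rw [hFdef]
    exact mul_nonneg (mul_nonneg (mul_nonneg (by positivity) (by positivity))
      (Real.rpow_nonneg (jb_pos _).le _)) (Real.rpow_nonneg (jb_pos _).le _)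
  have hFpt : ∀ nm : ℤ × ℤ, ENNReal.ofReal (F nm) ≤
      ENNReal.ofReal (Real.sqrt 2 ^ β) * (bE nm.1 * bE nm.2 * wE (nm.1 + nm.2)) := by
    rintro ⟨n, m⟩
    have hreal : F (n, m) ≤ Real.sqrt 2 ^ β *
        ((jb (n : ℝ) ^ (-β) * ‖α n‖ ^ 2) *
          ((jb (m : ℝ) ^ (-β) * ‖α m‖ ^ 2) * jb ((n : ℝ) + (m : ℝ)) ^ (-(2 * σ)))) := by
      rw [hFdef]
      dsimp only
      calc ‖α n‖ ^ 2 * ‖α m‖ ^ 2 * jb ((n : ℝ) + (m : ℝ)) ^ (-(2 * σ)) *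
            jb ((n : ℝ) ^ 2 + (m : ℝ) ^ 2) ^ (-β)
          ≤ ‖α n‖ ^ 2 * ‖α m‖ ^ 2 * jb ((n : ℝ) + (m : ℝ)) ^ (-(2 * σ)) *
            (Real.sqrt 2 ^ β * (jb (n : ℝ) ^ (-β) * jb (m : ℝ) ^ (-β))) := by
            refine mul_le_mul_of_nonneg_left (jbneg _ _ hβ0.le) ?_
            exact mul_nonneg (mul_nonneg (by positivity) (by positivity))
              (Real.rpow_nonneg (jb_pos _).le _)
        _ = _ := by ring
    calc ENNReal.ofReal (F (n, m)) ≤ ENNReal.ofReal (Real.sqrt 2 ^ β *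
          ((jb (n : ℝ) ^ (-β) * ‖α n‖ ^ 2) *
            ((jb (m : ℝ) ^ (-β) * ‖α m‖ ^ 2) * jb ((n : ℝ) + (m : ℝ)) ^ (-(2 * σ))))) :=
          ENNReal.ofReal_le_ofReal hreal
      _ = ENNReal.ofReal (Real.sqrt 2 ^ β) * (bE n * bE m * wE (n + m)) := by
          rw [ENNReal.ofReal_mul (by positivity), ENNReal.ofReal_mul (hb_nn n),
            ENNReal.ofReal_mul (hb_nn m), hbEdef, hwEdef]
          push_cast
          ring
  have key : ∑' nm : ℤ × ℤ, ENNReal.ofReal (F nm) ≤ ENNReal.ofReal (C * B ^ (4 / p)) := by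
    calc ∑' nm : ℤ × ℤ, ENNReal.ofReal (F nm)
        ≤ ∑' nm : ℤ × ℤ, ENNReal.ofReal (Real.sqrt 2 ^ β) *
            (bE nm.1 * bE nm.2 * wE (nm.1 + nm.2)) := ENNReal.tsum_le_tsum hFpt
      _ = ENNReal.ofReal (Real.sqrt 2 ^ β) *
            ∑' nm : ℤ × ℤ, bE nm.1 * bE nm.2 * wE (nm.1 + nm.2) := ENNReal.tsum_mul_left
      _ ≤ ENNReal.ofReal (Real.sqrt 2 ^ β) *
            ((∑' k : ℤ, bE k ^ q) ^ (2 * (t1 + t2)) * (∑' s : ℤ, WE s) ^ (2 * t2)) :=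
          mul_le_mul_right (young_sum bE WE wE hqpos.le ht1 ht2 hqt hT hwW) _
      _ = ENNReal.ofReal (C * B ^ (4 / p)) := by
          rw [hBE, hSWE, h2q, hCdef,
            ENNReal.ofReal_mul (by positivity : (0:ℝ) ≤ Real.sqrt 2 ^ β * Sτ ^ (2 * t2)),
            ENNReal.ofReal_mul (by positivity : (0:ℝ) ≤ Real.sqrt 2 ^ β),
            ← ENNReal.ofReal_rpow_of_nonneg hBnn (by positivity : (0:ℝ) ≤ 4 / p),
            ← ENNReal.ofReal_rpow_of_nonneg hSτpos.le (by positivity : (0:ℝ) ≤ 2 * t2)]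
          ring
  show ∑' nm : ℤ × ℤ, F nm ≤ C * B ^ (4 / p)
  by_cases hsum : Summable F
  · have heq : ENNReal.ofReal (∑' nm : ℤ × ℤ, F nm) = ∑' nm : ℤ × ℤ, ENNReal.ofReal (F nm) :=
      ENNReal.ofReal_tsum_of_nonneg hFnn hsum
    have := heq ▸ key
    exact (ENNReal.ofReal_le_ofReal_iff (by positivity)).1 this
  · rw [tsum_eq_zero_of_not_summable hsum]
    positivity
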